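/- The iteration of T_P from the bottom interpretation stabilizes after finitely many steps: letting ⊥ be the interpretation mapping every atom to v_0, the interpretation T_P^[Fintype.card A · n](⊥) (the (card A · n)-fold iterate of T_P applied to ⊥) is a fixed point of T_P and equals the least fixed point of T_P. -/

import Mathlib

namespace FLLP

def CL {n : ℕ} (x y : Fin (n+1)) : Fin (n+1) :=
  ⟨x.val + y.val - n, by have := x.isLt; have := y.isLt; omega⟩

def RL {n : ℕ} (j i : Fin (n+1)) : Fin (n+1) :=
  if h : i ≤ j then ⟨n, n.lt_succ_self⟩
  else ⟨n + j.val - i.val, by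
    have h' : j.val < i.val := Fin.lt_def.mp (lt_of_not_ge h)
    have := i.isLt; omega⟩

def RG {n : ℕ} (j i : Fin (n+1)) : Fin (n+1) :=
  if i ≤ j then ⟨n, n.lt_succ_self⟩ else j

inductive Body (A H : Type) : Type where
  | atom : A → Body A H
  | andG : Body A H → Body A H → Body A H
  | andL : Body A H → Body A H → Body A H
  | or   : Body A H → Body A H → Body A H
  | hedge : H → Body A H → Body A H
  deriving DecidableEq

def eval {n : ℕ} {A H : Type} (hinv : H → Fin (n+1) → Fin (n+1))
    (f : A → Fin (n+1)) : Body A H → Fin (n+1)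
  | .atom a => f a
  | .andG B₁ B₂ => min (eval hinv f B₁) (eval hinv f B₂)
  | .andL B₁ B₂ => CL (eval hinv f B₁) (eval hinv f B₂)
  | .or B₁ B₂ => max (eval hinv f B₁) (eval hinv f B₂)
  | .hedge h B => hinv h (eval hinv f B)

inductive Imp : Type where
  | luka : Imp
  | godel : Imp
  deriving DecidableEq

def tnorm {n : ℕ} : Imp → Fin (n+1) → Fin (n+1) → Fin (n+1)
  | .luka => CL
  | .godel => min

def implicator {n : ℕ} : Imp → Fin (n+1) → Fin (n+1) → Fin (n+1)
  | .luka => RL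
  | .godel => RG

structure Program (n : ℕ) (A H : Type) [DecidableEq A] [DecidableEq H] : Type where
  rules : Finset (A × Body A H × Fin (n+1) × Imp)
  facts : Finset (A × Fin (n+1))

noncomputable def TP {n : ℕ} {A H : Type} [DecidableEq A] [DecidableEq H]
    (P : Program n A H) (hinv : H → Fin (n+1) → Fin (n+1))
    (f : A → Fin (n+1)) : A → Fin (n+1) := fun a =>
  max ((P.rules.filter (fun R => R.1 = a)).sup
        (fun R => tnorm R.2.2.2 (eval hinv f R.2.1) R.2.2.1))
      ((P.facts.filter (fun F => F.1 = a)).sup (fun F => F.2))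

def isModel {n : ℕ} {A H : Type} [DecidableEq A] [DecidableEq H]
    (P : Program n A H) (hinv : H → Fin (n+1) → Fin (n+1))
    (f : A → Fin (n+1)) : Prop :=
  (∀ R ∈ P.rules, R.2.2.1 ≤ implicator R.2.2.2 (f R.1) (eval hinv f R.2.1)) ∧
  (∀ F ∈ P.facts, F.2 ≤ f F.1)


lemma CL_mono {n : ℕ} {x x' y y' : Fin (n+1)} (hx : x ≤ x') (hy : y ≤ y') :
    CL x y ≤ CL x' y' := by
  simp only [CL, Fin.le_def] at *
  omega

lemma eval_mono {n : ℕ} {A H : Type} (hinv : H → Fin (n+1) → Fin (n+1))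
    (hmono : ∀ h, Monotone (hinv h)) {f g : A → Fin (n+1)} (hfg : ∀ a, f a ≤ g a) :
    ∀ B : Body A H, eval hinv f B ≤ eval hinv g B := by
  intro B
  induction B with
  | atom a => exact hfg a
  | andG B₁ B₂ ih₁ ih₂ => exact min_le_min ih₁ ih₂
  | andL B₁ B₂ ih₁ ih₂ => exact CL_mono ih₁ ih₂
  | or B₁ B₂ ih₁ ih₂ => exact max_le_max ih₁ ih₂
  | hedge h B ih => exact hmono h ih

lemma TP_mono {n : ℕ} {A H : Type} [DecidableEq A] [DecidableEq H]
    (P : Program n A H) (hinv : H → Fin (n+1) → Fin (n+1))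
    (hmono : ∀ h, Monotone (hinv h)) {f g : A → Fin (n+1)} (hfg : ∀ a, f a ≤ g a) :
    ∀ a, TP P hinv f a ≤ TP P hinv g a := by
  intro a
  apply max_le_max _ le_rfl
  apply Finset.sup_mono_fun
  intro R _
  have he := eval_mono hinv hmono hfg R.2.1
  cases R.2.2.2 with
  | luka => exact CL_mono he le_rfl
  | godel => exact min_le_min he le_rfl


theorem TP_iterate_card_mul_n (n : ℕ) (hn : 1 ≤ n) (A H : Type) [Fintype A] [Fintype H]
    [DecidableEq A] [DecidableEq H]
    (hinv : H → Fin (n+1) → Fin (n+1)) (hmono : ∀ h, Monotone (hinv h))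
    (P : Program n A H) :
    TP P hinv ((TP P hinv)^[Fintype.card A * n] (fun _ => 0)) =
      (TP P hinv)^[Fintype.card A * n] (fun _ => 0) ∧
    ∀ g : A → Fin (n+1), TP P hinv g = g →
      ∀ a, (TP P hinv)^[Fintype.card A * n] (fun _ => 0) a ≤ g a := by
  set T := TP P hinv with hT
  set N := Fintype.card A * n with hN
  set F : ℕ → A → Fin (n+1) := fun k => T^[k] (fun _ => 0) with hF
  have hstep : ∀ k, F (k+1) = T (F k) := by
    intro k; simp [hF, Function.iterate_succ_apply']
  have hchain : ∀ k a, F k a ≤ F (k+1) a := by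
    intro k
    induction k with
    | zero =>
      intro a
      have : F 0 a = 0 := rfl
      rw [this]; exact Fin.zero_le _
    | succ m ih =>
      intro a
      rw [hstep, hstep]
      exact TP_mono P hinv hmono ih a
  have msum : (A → Fin (n+1)) → ℕ := fun f => ∑ a, (f a).val
  set msum : (A → Fin (n+1)) → ℕ := fun f => ∑ a, (f a).val with hmsum
  have hbound : ∀ f, msum f ≤ N := by
    intro f
    calc msum f ≤ ∑ _a : A, n := Finset.sum_le_sum (fun a _ => Nat.lt_succ_iff.mp (f a).isLt)
    _ = N := by simp [hN, mul_comm]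
  have hmlt : ∀ {f g : A → Fin (n+1)}, (∀ a, f a ≤ g a) → f ≠ g → msum f < msum g := by
    intro f g hfg hne
    apply Finset.sum_lt_sum (fun a _ => (show (f a).val ≤ (g a).val from hfg a))
    by_contra hc
    push_neg at hc
    apply hne
    funext a
    exact le_antisymm (hfg a) (hc a (Finset.mem_univ a))
  have key : ∀ k, T (F k) = F k ∨ k ≤ msum (F k) := by
    intro k
    induction k with
    | zero => exact Or.inr (Nat.zero_le _)
    | succ m ih =>
      rcases ih with hfix | hle
      · left
        have : F (m+1) = F m := by rw [hstep]; exact hfix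
        rw [this]; exact hfix
      · by_cases hfix : T (F m) = F m
        · left
          have : F (m+1) = F m := by rw [hstep]; exact hfix
          rw [this]; exact hfix
        · right
          have hne : F m ≠ F (m+1) := by
            rw [hstep]; intro h; exact hfix h.symm
          have := hmlt (hchain m) hne
          omega
  have hfixN : T (F N) = F N := by
    rcases key N with h | h
    · exact h
    · by_contra hne
      have hne' : F N ≠ F (N+1) := by
        rw [hstep]; intro h; exact hne h.symm
      have h1 := hmlt (hchain N) hne'
      have h2 := hbound (F (N+1))
      omega
  refine ⟨hfixN, ?_⟩
  intro g hg
  have : ∀ k a, F k a ≤ g a := by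
    intro k
    induction k with
    | zero => intro a; exact Fin.zero_le _
    | succ m ih =>
      intro a
      rw [hstep]
      calc T (F m) a ≤ T g a := TP_mono P hinv hmono ih a
      _ = g a := by rw [hg]
  exact this N

end FLLP
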